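/- Let A, B, C be bounded operators on a complex Hilbert space H. Then A*A − 2λB*B + λ²C*C ≥ 0 for all real λ > 0 if and only if ‖Bx‖² ≤ ‖Ax‖·‖Cx‖ for all x ∈ H. -/

import Mathlib

lemma real_quad_lemma (p q r : ℝ) (hp : 0 ≤ p) (hq : 0 ≤ q) (hr : 0 ≤ r) :
    (∀ lam : ℝ, 0 < lam → 0 ≤ p ^ 2 - 2 * lam * q ^ 2 + lam ^ 2 * r ^ 2) ↔
      q ^ 2 ≤ p * r := by
  constructor
  · intro h
    rcases eq_or_lt_of_le hp with hp0 | hp0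
    · have hq0 : q = 0 := by
        by_contra hq0
        have hq' : 0 < q := lt_of_le_of_ne hq (Ne.symm hq0)
        rcases eq_or_lt_of_le hr with hr0 | hr0
        · have := h 1 one_pos
          nlinarith
        · set lam := q ^ 2 / r ^ 2 with hlam
          have hlampos : 0 < lam := by positivity
          have h1 := h lam hlampos
          have hrl : lam * r ^ 2 = q ^ 2 := by
            rw [hlam]; exact div_mul_cancel₀ _ (pow_ne_zero 2 hr0.ne')
          have h2 : lam ^ 2 * r ^ 2 = lam * q ^ 2 := by
            rw [pow_two, mul_assoc, hrl]
          nlinarith [mul_pos hlampos (pow_pos hq' 2)]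
      rw [← hp0, hq0]
      simp [mul_nonneg hp hr, ← hp0]
    · rcases eq_or_lt_of_le hr with hr0 | hr0
      · have hq0 : q = 0 := by
          by_contra hq0
          have hq' : 0 < q := lt_of_le_of_ne hq (Ne.symm hq0)
          set lam := p ^ 2 / q ^ 2 with hlam
          have hlampos : 0 < lam := by positivity
          have h1 := h lam hlampos
          have h2 : 2 * lam * q ^ 2 = 2 * p ^ 2 := by
            rw [hlam, mul_assoc, div_mul_cancel₀ _ (pow_ne_zero 2 hq'.ne')]
          have hr2 : r ^ 2 = 0 := by rw [← hr0]; ring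
          nlinarith [pow_pos hp0 2]
        rw [hq0]
        nlinarith
      · have hlampos : 0 < p / r := by positivity
        have h1 := h (p / r) hlampos
        have h2 : (p / r) * r = p := div_mul_cancel₀ p (ne_of_gt hr0)
        have h3 : (p / r) ^ 2 * r ^ 2 = p ^ 2 := by
          rw [← mul_pow, h2]
        nlinarith
  · intro h lam hlam
    nlinarith [sq_nonneg (p - lam * r), mul_pos hlam hlam]

theorem positivity_iff_norm_ineq
    {H : Type*} [NormedAddCommGroup H] [InnerProductSpace ℂ H] [CompleteSpace H]
    (A B C : H →L[ℂ] H) :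
    (∀ lam : ℝ, 0 < lam → ∀ x : H,
        0 ≤ (@inner ℂ _ _
          ((ContinuousLinearMap.adjoint A * A
            - (2 * (lam : ℂ)) • (ContinuousLinearMap.adjoint B * B)
            + ((lam : ℂ) ^ 2) • (ContinuousLinearMap.adjoint C * C)) x) x).re) ↔
      (∀ x : H, ‖B x‖ ^ 2 ≤ ‖A x‖ * ‖C x‖) := by
  have key : ∀ (lam : ℝ) (x : H),
      (@inner ℂ _ _
          ((ContinuousLinearMap.adjoint A * A
            - (2 * (lam : ℂ)) • (ContinuousLinearMap.adjoint B * B)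
            + ((lam : ℂ) ^ 2) • (ContinuousLinearMap.adjoint C * C)) x) x).re
        = ‖A x‖ ^ 2 - 2 * lam * ‖B x‖ ^ 2 + lam ^ 2 * ‖C x‖ ^ 2 := by
    intro lam x
    simp only [ContinuousLinearMap.sub_apply, ContinuousLinearMap.add_apply,
      ContinuousLinearMap.smul_apply, ContinuousLinearMap.mul_apply,
      inner_sub_left, inner_add_left, inner_smul_left,
      ContinuousLinearMap.adjoint_inner_left, inner_self_eq_norm_sq_to_K,
      Complex.add_re, Complex.sub_re, Complex.mul_re, map_mul, Complex.conj_ofReal,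
      map_pow, map_ofNat]
    norm_cast
    simp only [Complex.coe_algebraMap, Complex.ofReal_re, Complex.ofReal_im]
    ring
  constructor
  · intro h x
    exact (real_quad_lemma ‖A x‖ ‖B x‖ ‖C x‖ (norm_nonneg _) (norm_nonneg _)
      (norm_nonneg _)).mp (fun lam hlam => by rw [← key lam x]; exact h lam hlam x) 
  · intro h lam hlam x
    rw [key lam x]
    exact (real_quad_lemma ‖A x‖ ‖B x‖ ‖C x‖ (norm_nonneg _) (norm_nonneg _)
      (norm_nonneg _)).mpr (h x) lam hlam
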